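/- The matrices Q, g, N satisfy the identities Q N = N, N Q = N, Q g N = Q, and N g Q = Q. -/
import Mathlib


open Matrix

/-- The identities `Q N = N`, `N Q = N`, `Q g N = Q`, and `N g Q = Q`. -/
theorem QN_NQ_QgN_NgQ_identities {n m : ℕ} (hm : 0 < m) (hmn : m < n)
    (J : Matrix (Fin m) (Fin n) ℝ) (hJ : J.rank = m)
    (g : Matrix (Fin n) (Fin n) ℝ) (hg : g.PosDef)
    (hJJ : IsUnit (J * Jᵀ).det) (hJgJ : IsUnit (J * g⁻¹ * Jᵀ).det)
    (Q N : Matrix (Fin n) (Fin n) ℝ)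
    (hQ : Q = 1 - Jᵀ * (J * Jᵀ)⁻¹ * J)
    (hN : N = g⁻¹ - g⁻¹ * Jᵀ * (J * g⁻¹ * Jᵀ)⁻¹ * J * g⁻¹) :
    Q * N = N ∧ N * Q = N ∧ Q * g * N = Q ∧ N * g * Q = Q := by
  have hgdet : IsUnit g.det := isUnit_iff_ne_zero.mpr hg.det_pos.ne'
  have hgi : g * g⁻¹ = 1 := Matrix.mul_nonsing_inv g hgdet
  have hig : g⁻¹ * g = 1 := Matrix.nonsing_inv_mul g hgdet
  have h1 : (J * g⁻¹ * Jᵀ) * (J * g⁻¹ * Jᵀ)⁻¹ = 1 := Matrix.mul_nonsing_inv _ hJgJ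
  have h2 : (J * g⁻¹ * Jᵀ)⁻¹ * (J * g⁻¹ * Jᵀ) = 1 := Matrix.nonsing_inv_mul _ hJgJ
  have h3 : (J * Jᵀ) * (J * Jᵀ)⁻¹ = 1 := Matrix.mul_nonsing_inv _ hJJ
  have h4 : (J * Jᵀ)⁻¹ * (J * Jᵀ) = 1 := Matrix.nonsing_inv_mul _ hJJ
  have hJN : J * N = 0 := by
    rw [hN, Matrix.mul_sub]
    have : J * (g⁻¹ * Jᵀ * (J * g⁻¹ * Jᵀ)⁻¹ * J * g⁻¹)
        = ((J * g⁻¹ * Jᵀ) * (J * g⁻¹ * Jᵀ)⁻¹) * (J * g⁻¹) := by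
      simp only [Matrix.mul_assoc]
    rw [this, h1, Matrix.one_mul, sub_self]
  have hNJ : N * Jᵀ = 0 := by
    rw [hN, Matrix.sub_mul]
    have : g⁻¹ * Jᵀ * (J * g⁻¹ * Jᵀ)⁻¹ * J * g⁻¹ * Jᵀ
        = (g⁻¹ * Jᵀ) * ((J * g⁻¹ * Jᵀ)⁻¹ * (J * g⁻¹ * Jᵀ)) := by
      simp only [Matrix.mul_assoc]
    rw [this, h2, Matrix.mul_one, sub_self]
  have hJQ : J * Q = 0 := by
    rw [hQ, Matrix.mul_sub, Matrix.mul_one]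
    have : J * (Jᵀ * (J * Jᵀ)⁻¹ * J) = ((J * Jᵀ) * (J * Jᵀ)⁻¹) * J := by
      simp only [Matrix.mul_assoc]
    rw [this, h3, Matrix.one_mul, sub_self]
  have hQJ : Q * Jᵀ = 0 := by
    rw [hQ, Matrix.sub_mul, Matrix.one_mul]
    have : Jᵀ * (J * Jᵀ)⁻¹ * J * Jᵀ = Jᵀ * ((J * Jᵀ)⁻¹ * (J * Jᵀ)) := by
      simp only [Matrix.mul_assoc]
    rw [this, h4, Matrix.mul_one, sub_self]
  have hQN : Q * N = N := by
    rw [hQ, Matrix.sub_mul, Matrix.one_mul]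
    have : Jᵀ * (J * Jᵀ)⁻¹ * J * N = Jᵀ * ((J * Jᵀ)⁻¹ * (J * N)) := by
      simp only [Matrix.mul_assoc]
    rw [this, hJN, Matrix.mul_zero, Matrix.mul_zero, sub_zero]
  have hNQ : N * Q = N := by
    conv_lhs => rw [hQ]
    rw [Matrix.mul_sub, Matrix.mul_one]
    have : N * (Jᵀ * (J * Jᵀ)⁻¹ * J) = (N * Jᵀ) * ((J * Jᵀ)⁻¹ * J) := by
      simp only [Matrix.mul_assoc]
    rw [this, hNJ, Matrix.zero_mul, sub_zero]
  have hgN : g * N = 1 - Jᵀ * ((J * g⁻¹ * Jᵀ)⁻¹ * (J * g⁻¹)) := by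
    rw [hN, Matrix.mul_sub, hgi]
    congr 1
    calc g * (g⁻¹ * Jᵀ * (J * g⁻¹ * Jᵀ)⁻¹ * J * g⁻¹)
        = (g * g⁻¹) * (Jᵀ * ((J * g⁻¹ * Jᵀ)⁻¹ * (J * g⁻¹))) := by
          simp only [Matrix.mul_assoc]
      _ = Jᵀ * ((J * g⁻¹ * Jᵀ)⁻¹ * (J * g⁻¹)) := by rw [hgi, Matrix.one_mul]
  have hNg : N * g = 1 - (g⁻¹ * Jᵀ * (J * g⁻¹ * Jᵀ)⁻¹) * J := by
    rw [hN, Matrix.sub_mul, hig]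
    congr 1
    calc g⁻¹ * Jᵀ * (J * g⁻¹ * Jᵀ)⁻¹ * J * g⁻¹ * g
        = (g⁻¹ * Jᵀ * (J * g⁻¹ * Jᵀ)⁻¹ * J) * (g⁻¹ * g) := by
          simp only [Matrix.mul_assoc]
      _ = (g⁻¹ * Jᵀ * (J * g⁻¹ * Jᵀ)⁻¹) * J := by rw [hig, Matrix.mul_one]
  refine ⟨hQN, hNQ, ?_, ?_⟩
  · rw [Matrix.mul_assoc, hgN, Matrix.mul_sub, Matrix.mul_one,
      ← Matrix.mul_assoc, hQJ, Matrix.zero_mul, sub_zero]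
  · rw [hNg, Matrix.sub_mul, Matrix.one_mul, Matrix.mul_assoc, hJQ,
      Matrix.mul_zero, sub_zero]
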